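/- Let α be a real number with α − max G ∉ {0, −1, −2, …}, and let κ_i^g (i = 0,…,m−1, g ∈ G) be arbitrary real numbers (no admissibility assumption). Then for all integers k, u, i with 0 ≤ k ≤ u and 0 ≤ i ≤ m−1, one has ⟨x^k·L_u^α(x), x^i⟩ = Γ(α)·Σ_{g∈G} κ_i^g·Σ_{l=k}^{g} (α−l)_k·w_l^g·binom(u+l−k, l−k), where ⟨·,·⟩ is the bilinear form defined below and binom(u+l−k, l−k) is the ordinary integer binomial coefficient. -/

import Mathlib

open Polynomial Finset

/-- Pochhammer symbol `(a)_l = a (a+1) ⋯ (a+l-1)`, with `(a)_0 = 1`. -/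
noncomputable def poch (a : ℝ) (l : ℕ) : ℝ := ∏ t ∈ Finset.range l, (a + t)

/-- Generalized binomial coefficient `binom (n+α, n−j) = (α+j+1)⋯(α+n)/(n−j)!`. -/
noncomputable def genBinom (α : ℝ) (n j : ℕ) : ℝ :=
  (∏ t ∈ Finset.Ico (j + 1) (n + 1), (α + t)) / (Nat.factorial (n - j) : ℝ)

/-- Laguerre polynomial `L_n^α(x) = Σ_{j=0}^n ((−x)^j/j!)·binom(n+α, n−j)`. -/
noncomputable def laguerre (α : ℝ) (n : ℕ) : Polynomial ℝ :=
  ∑ j ∈ Finset.range (n + 1),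
    Polynomial.C ((-1 : ℝ) ^ j / (Nat.factorial j : ℝ) * genBinom α n j) * Polynomial.X ^ j

/-- Laguerre polynomials indexed by `ℤ`, with the convention `L_u^α = 0` for `u < 0`. -/
noncomputable def laguerreZ (α : ℝ) (n : ℤ) : Polynomial ℝ :=
  if n < 0 then 0 else laguerre α n.toNat

/-- The polynomial `binom (x+l, l) = (x+1)(x+2)⋯(x+l)/l!`. -/
noncomputable def binomPoly (l : ℕ) : Polynomial ℝ :=
  Polynomial.C ((Nat.factorial l : ℝ)⁻¹) *
    ∏ t ∈ Finset.range l, (Polynomial.X + Polynomial.C ((t : ℝ) + 1))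

/-- The Casoratian `Ω_G(x) = det (R_{g_l}(x−j))_{l,j=1,…,m}`. -/
noncomputable def casoratian {m : ℕ} (R : Fin m → Polynomial ℝ) (x : ℝ) : ℝ :=
  Matrix.det (Matrix.of fun l j : Fin m => (R l).eval (x - ((j : ℕ) + 1)))

/-- The maximum of the finite set `G` (given by the values of `g`). -/
noncomputable def Gmax {m : ℕ} (g : Fin m → ℕ) : ℕ := Finset.univ.sup g

/-- The polynomial `q_n`, defined as an `(m+1)×(m+1)` determinant whose first row is
`(L_n^α(x), …, L_{n−m}^α(x))` and whose `(h+1)`-th row is `(R_{g_h}(n), …, R_{g_h}(n−m))`. -/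
noncomputable def qpoly (α : ℝ) {m : ℕ} (R : Fin m → Polynomial ℝ) (n : ℤ) : Polynomial ℝ :=
  Matrix.det (Matrix.of fun i j : Fin (m + 1) =>
    if h : (i : ℕ) = 0 then laguerreZ α (n - (j : ℕ))
    else Polynomial.C ((R ⟨(i : ℕ) - 1, by have := i.isLt; omega⟩).eval ((n : ℝ) - ((j : ℕ) : ℝ))))

/-- `q_n` extended by the convention `q_k = 0` for `k < 0`. -/
noncomputable def qZ (α : ℝ) {m : ℕ} (R : Fin m → Polynomial ℝ) (n : ℤ) : Polynomial ℝ :=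
  if n < 0 then 0 else qpoly α R n

/-- `momFun β p k = L_β(p(x)·x^k)`, where `L_β` is the moment functional on Laurent
polynomials determined by `L_β(x^j) = Γ(β+j+1)`. -/
noncomputable def momFun (β : ℝ) (p : Polynomial ℝ) (k : ℤ) : ℝ :=
  ∑ t ∈ Finset.range (p.natDegree + 1), p.coeff t * Real.Gamma (β + t + k + 1)

/-- The bilinear form `⟨p, q⟩ = L_{α−m}(p·q) + Σ_{i=0}^{m−1} (q^{(i)}(0)/i!)·L_α(p·U_i)`,
where `U_i(x) = Σ_{g∈G} ( −x^{i−m}/m + κ_i^g·Σ_{l=0}^g (α−l)_l w_l^g x^{−l−1} )`. -/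
noncomputable def bilin (α : ℝ) {m : ℕ} (g : Fin m → ℕ) (κ : ℕ → Fin m → ℝ)
    (w : Fin m → ℕ → ℝ) (p q : Polynomial ℝ) : ℝ :=
  momFun (α - m) (p * q) 0 +
    ∑ i ∈ Finset.range m,
      (Polynomial.eval 0 (Polynomial.derivative^[i] q) / (Nat.factorial i : ℝ)) *
        (∑ h : Fin m,
          (-(1 / (m : ℝ)) * momFun α p ((i : ℤ) - (m : ℤ)) +
            κ i h * ∑ l ∈ Finset.range (g h + 1),
              poch (α - l) l * w h l * momFun α p (-((l : ℤ) + 1))))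

/-- The bilinear form `⟨p, q⟩_ξ` (case `α` a positive integer with `α ≤ max G`). -/
noncomputable def bilinXi (α : ℕ) {m : ℕ} (g : Fin m → ℕ) (κ : ℕ → Fin m → ℝ)
    (w : Fin m → ℕ → ℝ) (p q : Polynomial ℝ) : ℝ :=
  momFun ((α - m : ℕ) : ℝ) (p * Polynomial.derivative^[m - α] q) 0 +
    ∑ i ∈ Finset.range m,
      (Polynomial.eval 0 (Polynomial.derivative^[i] q) / (Nat.factorial i : ℝ)) *
        (∑ h : Fin m,
          (poch ((i : ℝ) - m + α + 1) (m - α) * (-(1 / (m : ℝ))) * momFun α p ((i : ℤ) - (m : ℤ)) +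
            κ i h * ∑ l ∈ Finset.range (if g h < α then g h + 1 else α),
              poch ((α : ℝ) - l) l * w h l * momFun α p (-((l : ℤ) + 1)))) +
    Real.Gamma α *
      ∑ i ∈ Finset.range m,
        (Polynomial.eval 0 (Polynomial.derivative^[i] q) / (Nat.factorial i : ℝ)) *
          ∑ h ∈ Finset.univ.filter (fun h : Fin m => α ≤ g h),
            κ i h *
              ∑ j ∈ Finset.range (g h - α + 1),
                (Polynomial.eval 0 (Polynomial.derivative^[j] p) / (Nat.factorial j : ℝ)) *
                  ∑ l ∈ Finset.Icc (α + j) (g h), poch ((α : ℝ) - l) j * w h l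


section Aux

lemma poch_add (a : ℝ) (k j : ℕ) : poch a (k + j) = poch a k * poch (a + k) j := by
  unfold poch
  rw [Finset.prod_range_add]
  congr 1
  refine Finset.prod_congr rfl fun t _ => by push_cast; ring

lemma Gamma_poch (a : ℝ) (j : ℕ) (h : ∀ t : ℕ, t < j → a + t ≠ 0) :
    Real.Gamma (a + j) = Real.Gamma a * poch a j := by
  induction j with
  | zero => simp [poch]
  | succ n ih =>
    have hn : a + n ≠ 0 := h n (by omega)
    have h1 : a + ((n+1 : ℕ) : ℝ) = (a + n) + 1 := by push_cast; ring
    rw [h1, Real.Gamma_add_one hn, ih (fun t ht => h t (by omega))]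
    simp [poch, Finset.prod_range_succ]; ring

lemma poch_factorial (d u : ℕ) :
    poch ((d:ℝ)+1) u = ((u+d).factorial : ℝ) / (d.factorial : ℝ) := by
  induction u with
  | zero =>
    simp [poch]
    rw [div_self (Nat.cast_ne_zero.mpr d.factorial_ne_zero)]
  | succ u ih =>
    have hd : (d.factorial : ℝ) ≠ 0 := Nat.cast_ne_zero.mpr d.factorial_ne_zero
    have h2 : u + 1 + d = (u + d) + 1 := by omega
    rw [poch, Finset.prod_range_succ, ← poch, ih, h2, Nat.factorial_succ]
    push_cast
    field_simp
    ring

lemma poch_div_choose (u d : ℕ) :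
    poch ((d:ℝ)+1) u / (u.factorial : ℝ) = ((u+d).choose d : ℝ) := by
  rw [poch_factorial]
  have h2 : (u+d).choose d * d.factorial * u.factorial = (u+d).factorial := by
    have h := Nat.choose_mul_factorial_mul_factorial (Nat.le_add_left d u)
    simpa using h
  have h3 : ((u+d).choose d : ℝ) * (d.factorial : ℝ) * (u.factorial : ℝ)
      = ((u+d).factorial : ℝ) := by exact_mod_cast congrArg (Nat.cast : ℕ → ℝ) h2
  have hd : (d.factorial : ℝ) ≠ 0 := Nat.cast_ne_zero.mpr d.factorial_ne_zero
  have hu : (u.factorial : ℝ) ≠ 0 := Nat.cast_ne_zero.mpr u.factorial_ne_zero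
  field_simp
  linarith

lemma poch_zero_of (l k u : ℕ) (hlk : l < k) (hku : k ≤ u) :
    poch ((l:ℝ) - k + 1) u = 0 := by
  unfold poch
  apply Finset.prod_eq_zero (Finset.mem_range.mpr (show k - 1 - l < u by omega))
  have h1 : ((k - 1 - l : ℕ) : ℝ) = (k:ℝ) - 1 - (l:ℝ) := by
    rw [Nat.cast_sub (by omega : l ≤ k - 1), Nat.cast_sub (by omega : 1 ≤ k)]
    norm_num
  rw [h1]
  ring

lemma Ssum (u : ℕ) : ∀ α c : ℝ,
    ∑ j ∈ range (u+1), (-1:ℝ)^j * (u.choose j) * poch (α - c) j * ∏ t ∈ Ico (j+1) (u+1), (α + t)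
      = poch (c+1) u := by
  induction u with
  | zero => intro α c; simp [poch]
  | succ u ih =>
    intro α c
    have hsplit : ∀ j : ℕ,
        ((-1:ℝ))^(j+1) * ((u+1).choose (j+1)) * poch (α - c) (j+1) * ∏ t ∈ Ico (j+2) (u+2), (α + t)
        = (-1:ℝ)^(j+1) * (u.choose (j+1)) * poch (α - c) (j+1) * ∏ t ∈ Ico (j+2) (u+2), (α + t)
          + (-1:ℝ)^(j+1) * (u.choose j) * poch (α - c) (j+1) * ∏ t ∈ Ico (j+2) (u+2), (α + t) := by
      intro j
      rw [Nat.choose_succ_succ]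
      push_cast
      ring
    rw [Finset.sum_range_succ' _ (u+1)]
    simp only [hsplit]
    rw [Finset.sum_add_distrib]
    have hA : (∑ j ∈ range (u+1), (-1:ℝ)^(j+1) * (u.choose (j+1)) * poch (α - c) (j+1) *
          ∏ t ∈ Ico (j+2) (u+2), (α + t))
        + (-1:ℝ)^0 * ((u+1).choose 0) * poch (α - c) 0 * ∏ t ∈ Ico 1 (u+2), (α + t)
        = (α + (u+1)) * poch (c+1) u := by
      have e1 : ((-1:ℝ))^0 * ((u+1).choose 0) * poch (α - c) 0 * ∏ t ∈ Ico 1 (u+2), (α + t)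
          = (-1:ℝ)^0 * ((u).choose 0) * poch (α - c) 0 * ∏ t ∈ Ico 1 (u+2), (α + t) := by
        simp
      rw [e1, ← Finset.sum_range_succ' (fun j => (-1:ℝ)^j * (u.choose j) * poch (α - c) j *
          ∏ t ∈ Ico (j+1) (u+2), (α + t)) (u+1)]
      rw [Finset.sum_range_succ]
      simp only [Nat.choose_succ_self, Nat.cast_zero]
      rw [← ih α c, Finset.mul_sum]
      rw [show (∑ j ∈ range (u+1), (-1:ℝ)^j * (u.choose j) * poch (α - c) j *
          ∏ t ∈ Ico (j+1) (u+2), (α + t)) = ∑ j ∈ range (u+1), (α + (u+1)) *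
          ((-1:ℝ)^j * (u.choose j) * poch (α - c) j * ∏ t ∈ Ico (j+1) (u+1), (α + t)) from ?_]
      · ring
      refine Finset.sum_congr rfl fun j hj => ?_
      have hj' := Finset.mem_range.mp hj
      rw [Finset.prod_Ico_succ_top (by omega : j+1 ≤ u+1)]
      push_cast
      ring
    have hB : (∑ j ∈ range (u+1), (-1:ℝ)^(j+1) * (u.choose j) * poch (α - c) (j+1) *
          ∏ t ∈ Ico (j+2) (u+2), (α + t)) = -(α - c) * poch (c+1) u := by
      rw [← ih (α+1) c, Finset.mul_sum]
      refine Finset.sum_congr rfl fun j hj => ?_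
      have e1 : poch (α - c) (j+1) = poch ((α+1) - c) j * (α - c) := by
        rw [poch, Finset.prod_range_succ', poch]
        congr 1
        · refine Finset.prod_congr rfl fun i _ => by push_cast; ring
        · norm_num
      have e2 : (∏ t ∈ Ico (j+2) (u+2), (α + t)) = ∏ t ∈ Ico (j+1) (u+1), ((α+1) + t) := by
        rw [Finset.prod_Ico_eq_prod_range, Finset.prod_Ico_eq_prod_range]
        have h3 : u + 2 - (j + 2) = u + 1 - (j + 1) := by omega
        rw [h3]
        refine Finset.prod_congr rfl fun i _ => by push_cast; ring
      rw [e1, e2]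
      ring
    have hp : poch (c+1) (u+1) = poch (c+1) u * (c+1+u) := by
      rw [poch, Finset.prod_range_succ, ← poch]
    rw [hp]
    linear_combination hA + hB

lemma laguerre_coeff (α : ℝ) (u j : ℕ) (hj : j < u + 1) :
    (laguerre α u).coeff j = (-1)^j / (j.factorial : ℝ) * genBinom α u j := by
  unfold laguerre
  rw [finset_sum_coeff]
  rw [Finset.sum_eq_single j]
  · simp [mul_assoc, coeff_C_mul, coeff_X_pow]
  · intro b _ hb
    simp only [mul_assoc, coeff_C_mul, coeff_X_pow]
    simp [Ne.symm hb]
  · intro h; exact absurd (Finset.mem_range.mpr hj) h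

lemma laguerre_natDegree (α : ℝ) (u : ℕ) : (laguerre α u).natDegree = u := by
  apply le_antisymm
  · rw [Polynomial.natDegree_le_iff_coeff_eq_zero]
    intro j hj
    unfold laguerre
    rw [finset_sum_coeff]
    refine Finset.sum_eq_zero fun b hb => ?_
    have hbj : b ≠ j := by have := Finset.mem_range.mp hb; omega
    simp only [mul_assoc, coeff_C_mul, coeff_X_pow]
    simp [Ne.symm hbj]
  · apply Polynomial.le_natDegree_of_ne_zero
    rw [laguerre_coeff α u u (by omega)]
    have hgb : genBinom α u u = 1 := by simp [genBinom]
    rw [hgb, mul_one]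
    exact div_ne_zero (pow_ne_zero _ (by norm_num)) (Nat.cast_ne_zero.mpr u.factorial_ne_zero)

lemma laguerre_ne_zero (α : ℝ) (u : ℕ) : laguerre α u ≠ 0 := by
  intro h
  have h2 := laguerre_coeff α u u (by omega)
  rw [h] at h2
  have h3 : genBinom α u u = 1 := by simp [genBinom]
  rw [h3, mul_one, Polynomial.coeff_zero] at h2
  exact div_ne_zero (pow_ne_zero _ (by norm_num : (-1:ℝ) ≠ 0))
    (Nat.cast_ne_zero.mpr u.factorial_ne_zero) h2.symm

lemma momFun_mul_X_pow (β : ℝ) (p : Polynomial ℝ) (hp : p ≠ 0) (i : ℕ) (r : ℤ) :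
    momFun β (p * X ^ i) r
      = ∑ s ∈ range (p.natDegree + 1), p.coeff s * Real.Gamma (β + s + i + r + 1) := by
  unfold momFun
  rw [Polynomial.natDegree_mul_X_pow i hp]
  have hset : range (p.natDegree + i + 1) = Ico 0 (p.natDegree + i + 1) := by
    rw [Finset.range_eq_Ico]
  rw [hset, ← Finset.sum_Ico_consecutive _ (Nat.zero_le i) (by omega : i ≤ p.natDegree + i + 1)]
  have h0 : ∑ t ∈ Ico 0 i, (p * X ^ i).coeff t * Real.Gamma (β + t + r + 1) = 0 := by
    refine Finset.sum_eq_zero fun t ht => ?_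
    have ht' := Finset.mem_Ico.mp ht
    rw [Polynomial.coeff_mul_X_pow']
    simp [Nat.not_le.mpr ht'.2]
  rw [h0, zero_add, Finset.sum_Ico_eq_sum_range]
  have hidx : p.natDegree + i + 1 - i = p.natDegree + 1 := by omega
  rw [hidx]
  refine Finset.sum_congr rfl fun s _ => ?_
  rw [Polynomial.coeff_mul_X_pow']
  simp only [le_add_iff_nonneg_right, Nat.zero_le, if_true, Nat.add_sub_cancel_left]
  congr 2
  push_cast
  ring

lemma momFun_laguerre (α : ℝ) (u k l : ℕ)
    (hne : ∀ t : ℕ, α + k - l + t ≠ 0) :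
    momFun α (X ^ k * laguerre α u) (-((l:ℤ)+1)) =
      Real.Gamma (α + k - l) * poch ((l:ℝ) - k + 1) u / u.factorial := by
  rw [mul_comm, momFun_mul_X_pow α (laguerre α u) (laguerre_ne_zero α u) k _]
  rw [laguerre_natDegree]
  have huf : (u.factorial : ℝ) ≠ 0 := Nat.cast_ne_zero.mpr u.factorial_ne_zero
  rw [show Real.Gamma (α + k - l) * poch ((l:ℝ) - k + 1) u / u.factorial
      = Real.Gamma (α + k - l) / u.factorial * poch ((l:ℝ)-k+1) u by ring,
     ← Ssum u α ((l:ℝ) - k), Finset.mul_sum]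
  refine Finset.sum_congr rfl fun j hj => ?_
  have hju : j ≤ u := by have := Finset.mem_range.mp hj; omega
  rw [laguerre_coeff α u j (by omega)]
  have hG : Real.Gamma (α + (j:ℝ) + (k:ℝ) + ((-((l:ℤ)+1) : ℤ) : ℝ) + 1)
      = Real.Gamma (α + (k:ℝ) - (l:ℝ)) * poch (α + (k:ℝ) - (l:ℝ)) j := by
    rw [show α + (j:ℝ) + (k:ℝ) + ((-((l:ℤ)+1) : ℤ) : ℝ) + 1
        = (α + (k:ℝ) - (l:ℝ)) + (j:ℝ) by push_cast; ring]
    exact Gamma_poch _ j (fun t _ => hne t)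
  rw [hG]
  unfold genBinom
  have hjf : (j.factorial : ℝ) ≠ 0 := Nat.cast_ne_zero.mpr j.factorial_ne_zero
  have hujf : ((u-j).factorial : ℝ) ≠ 0 := Nat.cast_ne_zero.mpr (u-j).factorial_ne_zero
  have hch : (u.choose j : ℝ) * (j.factorial) * ((u-j).factorial) = u.factorial := by
    exact_mod_cast congrArg (Nat.cast : ℕ → ℝ) (Nat.choose_mul_factorial_mul_factorial hju)
  have hc2 : (u.choose j : ℝ) = u.factorial / (j.factorial * (u-j).factorial) := by
    rw [eq_div_iff (mul_ne_zero hjf hujf)]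
    linear_combination hch
  have hpoch : poch (α - ((l:ℝ) - (k:ℝ))) j = poch (α + (k:ℝ) - (l:ℝ)) j := by
    rw [show α - ((l:ℝ) - (k:ℝ)) = α + (k:ℝ) - (l:ℝ) by ring]
  rw [hpoch, hc2]
  field_simp

end Aux

/-- key Lemma: for arbitrary `κ_i^g`, `0 ≤ k ≤ u` and `0 ≤ i ≤ m−1`,
`⟨x^k·L_u^α, x^i⟩ = Γ(α)·Σ_{g∈G} κ_i^g·Σ_{l=k}^{g} (α−l)_k·w_l^g·binom(u+l−k, l−k)`. -/
theorem statement7 (α : ℝ) (m : ℕ) (hm : 0 < m) (g : Fin m → ℕ) (hg : StrictMono g)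
    (hgpos : ∀ i, 0 < g i) (R : Fin m → Polynomial ℝ)
    (hdeg : ∀ i, (R i).natDegree = g i)
    (hlead : ∀ i, (R i).leadingCoeff = 1 / (Nat.factorial (g i) : ℝ))
    (hα : ∀ k : ℕ, α - (Gmax g : ℝ) ≠ -(k : ℝ))
    (w : Fin m → ℕ → ℝ)
    (hw : ∀ h : Fin m, R h = ∑ l ∈ Finset.range (g h + 1), Polynomial.C (w h l) * binomPoly l)
    (κ : ℕ → Fin m → ℝ) :
    ∀ k u i : ℕ, k ≤ u → i < m →
      bilin α g κ w (Polynomial.X ^ k * laguerre α u) (Polynomial.X ^ i) =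
        Real.Gamma α * ∑ h : Fin m, κ i h *
          ∑ l ∈ Finset.Icc k (g h),
            poch (α - l) k * w h l * (Nat.choose (u + l - k) (l - k) : ℝ) := by
  intro k u i hku him
  have hGmax : ∀ h : Fin m, g h ≤ Gmax g := fun h => Finset.le_sup (Finset.mem_univ h)
  have hne : ∀ l : ℕ, l ≤ Gmax g → ∀ t : ℕ, α + k - l + t ≠ 0 := by
    intro l hl t heq
    refine hα ((Gmax g - l) + k + t) ?_
    push_cast [Nat.cast_sub hl]
    linarith
  set p : Polynomial ℝ := X ^ k * laguerre α u with hpdef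
  have hpne : p ≠ 0 := mul_ne_zero (pow_ne_zero _ X_ne_zero) (laguerre_ne_zero α u)
  have hder : ∀ i' : ℕ,
      Polynomial.eval 0 (Polynomial.derivative^[i'] ((X : Polynomial ℝ)^i)) / (i'.factorial : ℝ)
        = if i' = i then 1 else 0 := by
    intro i'
    rw [Polynomial.iterate_derivative_X_pow_eq_smul i i']
    by_cases h : i' = i
    · subst h
      simp [Nat.descFactorial_self, Nat.sub_self]
      exact i'.factorial_ne_zero
    · rw [if_neg h]
      rcases Nat.lt_or_ge i' i with hlt | hge
      · simp [zero_pow (show i - i' ≠ 0 by omega)]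
      · have hd0 : i.descFactorial i' = 0 :=
          Nat.descFactorial_eq_zero_iff_lt.mpr (by omega)
        simp [hd0]
  unfold bilin
  rw [Finset.sum_eq_single i
    (fun b _ hb => by rw [hder b, if_neg hb, zero_mul])
    (fun hni => absurd (Finset.mem_range.mpr him) hni), hder i, if_pos rfl, one_mul]
  rw [Finset.sum_add_distrib]
  have hconst : (∑ _h : Fin m, -(1/(m:ℝ)) * momFun α p ((i:ℤ) - (m:ℤ)))
      = -momFun α p ((i:ℤ) - (m:ℤ)) := by
    rw [Finset.sum_const, Finset.card_univ, Fintype.card_fin, nsmul_eq_mul]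
    have hm' : (m:ℝ) ≠ 0 := Nat.cast_ne_zero.mpr (by omega)
    field_simp
  have hM : momFun (α - m) (p * X ^ i) 0 = momFun α p ((i:ℤ) - (m:ℤ)) := by
    rw [momFun_mul_X_pow _ p hpne i 0]
    unfold momFun
    refine Finset.sum_congr rfl fun s _ => ?_
    congr 2
    push_cast
    ring
  rw [hconst, hM]
  rw [show momFun α p ((i:ℤ) - (m:ℤ)) + (-momFun α p ((i:ℤ) - (m:ℤ)) +
      ∑ h : Fin m, κ i h * ∑ l ∈ Finset.range (g h + 1),
        poch (α - l) l * w h l * momFun α p (-((l:ℤ) + 1)))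
      = ∑ h : Fin m, κ i h * ∑ l ∈ Finset.range (g h + 1),
        poch (α - l) l * w h l * momFun α p (-((l:ℤ) + 1)) by ring]
  rw [Finset.mul_sum]
  refine Finset.sum_congr rfl fun h _ => ?_
  rw [show Real.Gamma α * (κ i h * ∑ l ∈ Finset.Icc k (g h),
      poch (α - l) k * w h l * ((u + l - k).choose (l - k) : ℝ))
      = κ i h * (Real.Gamma α * ∑ l ∈ Finset.Icc k (g h),
      poch (α - l) k * w h l * ((u + l - k).choose (l - k) : ℝ)) by ring]
  congr 1
  have hsub : Finset.Icc k (g h) ⊆ Finset.range (g h + 1) := by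
    intro x hx
    have := Finset.mem_Icc.mp hx
    exact Finset.mem_range.mpr (by omega)
  rw [← Finset.sum_subset hsub ?hz]
  case hz =>
    intro x hx hnx
    have hx1 := Finset.mem_range.mp hx
    have hx2 : x < k := by
      by_contra hc
      exact hnx (Finset.mem_Icc.mpr ⟨by omega, by omega⟩)
    rw [momFun_laguerre α u k x (hne x (by have := hGmax h; omega))]
    rw [poch_zero_of x k u hx2 hku]
    simp
  rw [Finset.mul_sum]
  refine Finset.sum_congr rfl fun l hl => ?_
  obtain ⟨hkl, hlg⟩ := Finset.mem_Icc.mp hl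
  have hnel : ∀ t : ℕ, α + k - l + t ≠ 0 := hne l (le_trans hlg (hGmax h))
  rw [momFun_laguerre α u k l hnel]
  have hB : poch ((l:ℝ) - k + 1) u / u.factorial = ((u + l - k).choose (l - k) : ℝ) := by
    rw [show (l:ℝ) - k + 1 = (((l - k : ℕ)):ℝ) + 1 by rw [Nat.cast_sub hkl]]
    rw [poch_div_choose u (l - k)]
    congr 2
    omega
  have hA : poch (α - l) l * Real.Gamma (α + k - l) = poch (α - l) k * Real.Gamma α := by
    have h1 := poch_add (α - l) k (l - k)
    rw [show k + (l - k) = l by omega] at h1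
    have h2 := Gamma_poch (α + (k:ℝ) - (l:ℝ)) (l - k) (fun t _ => hnel t)
    rw [show α + (k:ℝ) - (l:ℝ) + (((l - k : ℕ)):ℝ) = α by rw [Nat.cast_sub hkl]; ring] at h2
    have h3 : poch (α - (l:ℝ) + (k:ℝ)) (l - k) = poch (α + (k:ℝ) - (l:ℝ)) (l - k) := by
      rw [show α - (l:ℝ) + (k:ℝ) = α + (k:ℝ) - (l:ℝ) by ring]
    rw [h1, h3, h2]
    ring
  rw [show poch (α - l) l * w h l *
      (Real.Gamma (α + (k:ℝ) - (l:ℝ)) * poch ((l:ℝ) - k + 1) u / u.factorial)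
      = (poch (α - l) l * Real.Gamma (α + (k:ℝ) - (l:ℝ))) *
        (poch ((l:ℝ) - k + 1) u / u.factorial) * w h l by ring, hA, hB]
  ring
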